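/- arXiv:1704.02700 — 3 statements merged into one kernel-verified Lean document; each statement's English description precedes it below -/
import Mathlib

section
/- Define the relation P ≡ Q on implicational walks ending at the same vertex by: P ≡ Q iff P ∘ Q⁻¹ is not conflicting. Then ≡ is an equivalence relation on the set of implicational walks ending at each fixed vertex. -/
/-- A 0/1/all constraint between two domains: either a permutation
constraint (given by a bijection) or a two-fan constraint `(φ(u)=a) ∨ (φ(v)=b)`. -/
inductive ZOA (α β : Type) : Type where
  | perm (π : α ≃ β)
  | twofan (a : α) (b : β)

-- Unit propagation: fixing the first variable to `p`, the set of allowed values of the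
-- second variable is either everything (`none`, i.e. "all") or a singleton (`some q`).
open Classical in
noncomputable def ZOA.propg {α β : Type} : ZOA α β → α → Option β
  | .perm π, p => some (π p)
  | .twofan a b, p => if p = a then none else some b

/-- The reversed constraint on the opposite directed edge. -/
def ZOA.rev {α β : Type} : ZOA α β → ZOA β α
  | .perm π => .perm π.symm
  | .twofan a b => .twofan b a

/-- Satisfaction of a 0/1/all constraint by a pair of values. -/
def ZOA.Sat {α β : Type} : ZOA α β → α → β → Prop
  | .perm π, x, y => π x = y
  | .twofan a b, x, y => x = a ∨ y = b

/-- Walks in the primal graph given by an adjacency relation. -/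
inductive Wk {V : Type} (adj : V → V → Prop) : V → V → Type where
  | nil (v : V) : Wk adj v v
  | cons {u v w : V} (h : adj u v) (p : Wk adj v w) : Wk adj u w

/-- Concatenation of walks. -/
def Wk.app {V : Type} {adj : V → V → Prop} :
    ∀ {u v w : V}, Wk adj u v → Wk adj v w → Wk adj u w
  | _, _, _, .nil _, q => q
  | _, _, _, .cons h p, q => .cons h (Wk.app p q)

/-- Reversal of a walk (uses symmetry of the adjacency relation). -/
def Wk.rev {V : Type} {adj : V → V → Prop} (hs : ∀ u v : V, adj u v → adj v u) :
    ∀ {u v : V}, Wk adj u v → Wk adj v u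
  | _, _, .nil x => .nil x
  | _, _, .cons h p => Wk.app (Wk.rev hs p) (.cons (hs _ _ h) (.nil _))

/-- The list of vertices of a walk, in order (with multiplicity). -/
def Wk.support {V : Type} {adj : V → V → Prop} : ∀ {u w : V}, Wk adj u w → List V
  | _, _, .nil x => [x]
  | u, _, .cons _ p => u :: p.support

/-- Appending a single edge at the end of a walk. -/
def Wk.ext {V : Type} {adj : V → V → Prop} {s u t : V}
    (P : Wk adj s u) (h : adj u t) : Wk adj s t :=
  P.app (.cons h (.nil t))

/-- Unit propagation along a walk: `none` means "all" (no restriction), and "all" is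
absorbing. -/
noncomputable def runW {V : Type} {adj : V → V → Prop} {D : V → Type}
    (C : ∀ u v : V, adj u v → ZOA (D u) (D v)) :
    ∀ {u w : V}, Wk adj u w → D u → Option (D w)
  | _, _, .nil _, p => some p
  | _, _, .cons h q, p => ((C _ _ h).propg p).bind (runW C q)

/-- A walk is `φ_A`-implicational if it starts in `A` and unit propagation along it
from the assigned value yields a value (not "all"). -/
def Impl {V : Type} {adj : V → V → Prop} {D : V → Type}
    (C : ∀ u v : V, adj u v → ZOA (D u) (D v)) (A : Set V) (φ : ∀ v ∈ A, D v)
    {s t : V} (W : Wk adj s t) : Prop :=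
  ∃ hs : s ∈ A, (runW C W (φ s hs)).isSome

/-- A walk is `φ_A`-conflicting if it is implicational, ends in `A`, and its implied
value differs from the assigned value of its endpoint. -/
def Confl {V : Type} {adj : V → V → Prop} {D : V → Type}
    (C : ∀ u v : V, adj u v → ZOA (D u) (D v)) (A : Set V) (φ : ∀ v ∈ A, D v)
    {s t : V} (W : Wk adj s t) : Prop :=
  ∃ (hs : s ∈ A) (ht : t ∈ A) (q : D t),
    runW C W (φ s hs) = some q ∧ q ≠ φ t ht

/-- The type of implicational walks ending at a fixed vertex `t`. -/
def ImplWalk {V : Type} {adj : V → V → Prop} {D : V → Type}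
    (C : ∀ u v : V, adj u v → ZOA (D u) (D v)) (A : Set V) (φ : ∀ v ∈ A, D v)
    (t : V) : Type :=
  {P : Σ s : V, Wk adj s t // Impl C A φ P.2}

lemma runW_app {V : Type} {adj : V → V → Prop} {D : V → Type}
    (C : ∀ u v : V, adj u v → ZOA (D u) (D v)) {u v w : V}
    (P : Wk adj u v) (Q : Wk adj v w) (x : D u) :
    runW C (P.app Q) x = (runW C P x).bind (runW C Q) := by
  induction P with
  | nil => simp [Wk.app, runW]
  | cons h p ih =>
      simp only [Wk.app, runW]
      cases (C _ _ h).propg x with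
      | none => rfl
      | some y => simp [ih]

lemma ZOA.propg_rev_eq {α β : Type} (c : ZOA α β) {x : α} {y : β}
    (h : c.propg x = some y) :
    c.rev.propg y = none ∨ c.rev.propg y = some x := by
  cases c with
  | perm π =>
      simp only [ZOA.propg, Option.some.injEq] at h
      right; simp [ZOA.rev, ZOA.propg, ← h]
  | twofan a b =>
      simp only [ZOA.propg] at h
      split_ifs at h with hx
      left
      simp only [Option.some.injEq] at h
      simp [ZOA.rev, ZOA.propg, h]

lemma ZOA.propg_rev_ne {α β : Type} (c : ZOA α β) {x : α} {y : β}
    (h : c.propg x = some y) {p : β} (hp : p ≠ y) :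
    ∃ z, c.rev.propg p = some z ∧ z ≠ x := by
  cases c with
  | perm π =>
      simp only [ZOA.propg, Option.some.injEq] at h
      refine ⟨π.symm p, by simp [ZOA.rev, ZOA.propg], ?_⟩
      intro hz; apply hp; rw [← h, ← hz]; simp
  | twofan a b =>
      simp only [ZOA.propg] at h
      split_ifs at h with hx
      simp only [Option.some.injEq] at h
      refine ⟨a, ?_, fun hz => hx hz.symm⟩
      simp [ZOA.rev, ZOA.propg, h ▸ hp]

lemma runW_rev_eq {V : Type} {adj : V → V → Prop} {D : V → Type}
    (hsym : ∀ u v : V, adj u v → adj v u)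
    (C : ∀ u v : V, adj u v → ZOA (D u) (D v))
    (hcompat : ∀ u v (h : adj u v), C v u (hsym u v h) = (C u v h).rev)
    {u w : V} (Q : Wk adj u w) {x : D u} {y : D w}
    (h : runW C Q x = some y) :
    runW C (Q.rev hsym) y = none ∨ runW C (Q.rev hsym) y = some x := by
  induction Q with
  | nil => right; simp only [runW, Wk.rev, Option.some.injEq] at h ⊢; exact h.symm
  | @cons a b c hab q ih =>
      simp only [runW] at h
      obtain ⟨y1, hy1, hrest⟩ := Option.bind_eq_some_iff.mp h
      rw [Wk.rev, runW_app]
      rcases ih hrest with h1 | h1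
      · left; simp [h1]
      · rw [h1]
        rcases ZOA.propg_rev_eq _ hy1 with h2 | h2
        · left; simp only [runW, hcompat _ _ hab, Option.bind_some, h2]; rfl
        · right; simp only [runW, hcompat _ _ hab, Option.bind_some, h2]

lemma runW_rev_ne {V : Type} {adj : V → V → Prop} {D : V → Type}
    (hsym : ∀ u v : V, adj u v → adj v u)
    (C : ∀ u v : V, adj u v → ZOA (D u) (D v))
    (hcompat : ∀ u v (h : adj u v), C v u (hsym u v h) = (C u v h).rev)
    {u w : V} (Q : Wk adj u w) {x : D u} {y : D w}
    (h : runW C Q x = some y) {p : D w} (hp : p ≠ y) :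
    ∃ z, runW C (Q.rev hsym) p = some z ∧ z ≠ x := by
  induction Q with
  | nil =>
      simp only [runW, Option.some.injEq] at h
      exact ⟨p, rfl, h ▸ hp⟩
  | @cons a b c hab q ih =>
      simp only [runW] at h
      obtain ⟨y1, hy1, hrest⟩ := Option.bind_eq_some_iff.mp h
      obtain ⟨z1, hz1, hz1ne⟩ := ih hrest hp
      obtain ⟨z, hz, hzne⟩ := ZOA.propg_rev_ne _ hy1 hz1ne
      refine ⟨z, ?_, hzne⟩
      rw [Wk.rev, runW_app, hz1]
      simp only [runW, hcompat _ _ hab, Option.bind_some, hz]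

/-- the relation `P ≡ Q` (defined by: `P ∘ Q⁻¹` is not conflicting) is
an equivalence relation on the implicational walks ending at any fixed vertex. -/
theorem equiv_not_confl
    {V : Type} {adj : V → V → Prop} {D : V → Type}
    (hsym : ∀ u v : V, adj u v → adj v u)
    (C : ∀ u v : V, adj u v → ZOA (D u) (D v))
    (hcompat : ∀ u v (h : adj u v), C v u (hsym u v h) = (C u v h).rev)
    (A : Set V) (φ : ∀ v ∈ A, D v) (t : V) :
    Equivalence (fun P Q : ImplWalk C A φ t =>
      ¬ Confl C A φ (P.1.2.app (Q.1.2.rev hsym))) := by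
  classical
  have key : ∀ P Q : ImplWalk C A φ t,
      (¬ Confl C A φ (P.1.2.app (Q.1.2.rev hsym))) ↔
        (runW C P.1.2 (φ _ P.2.choose) = runW C Q.1.2 (φ _ Q.2.choose)) := by
    intro P Q
    obtain ⟨p, hp⟩ := Option.isSome_iff_exists.mp P.2.choose_spec
    obtain ⟨q, hq⟩ := Option.isSome_iff_exists.mp Q.2.choose_spec
    rw [hp, hq]
    constructor
    · intro hnc
      by_contra hne
      apply hnc
      have hpq : p ≠ q := by simpa using hne
      obtain ⟨z, hz, hzne⟩ := runW_rev_ne hsym C hcompat Q.1.2 hq hpq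
      exact ⟨P.2.choose, Q.2.choose, z, by rw [runW_app, hp]; exact hz, hzne⟩
    · rintro heq ⟨hs, ht, z, hrun, hzne⟩
      rw [runW_app] at hrun
      have hp' : runW C P.1.2 (φ _ hs) = some p := hp
      rw [hp', Option.bind_some] at hrun
      have hpq : p = q := by simpa using heq
      subst hpq
      rcases runW_rev_eq hsym C hcompat Q.1.2 hq with h1 | h1
      · rw [hrun] at h1; exact Option.some_ne_none _ h1
      · rw [hrun] at h1
        exact hzne (Option.some.inj h1)
  refine ⟨fun P => ?_, fun {P Q} h => ?_, fun {P Q R} h1 h2 => ?_⟩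
  · exact (key P P).mpr rfl
  · exact (key Q P).mpr ((key P Q).mp h).symm
  · exact (key P R).mpr (((key P Q).mp h1).trans ((key Q R).mp h2))
end

section
/- Let y be a maximum basic F-packing and x a minimum half-integral F-cover with |x| = |y|. Then: (1) x(V(I)) = 1 for every integral path I of y, and (2) x(V(S)) = 1/2 for every spoke S of every wheel of y. -/
open scoped BigOperators

/-- A *wheel* for the family `F` of conflicting `A`-walks: a simple cycle
`H_1 ∘ … ∘ H_d` (`d` odd) together with pairwise vertex-disjoint spokes
`S_1, …, S_d` from `A` to the cycle, each internally disjoint from the cycle, such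
that `S_i ∘ H_i ∘ S_{i+1}⁻¹ ∈ F` for all `i` (indices cyclic). -/
structure Wheel {V : Type} [DecidableEq V] {adj : V → V → Prop}
    (hs : ∀ u v : V, adj u v → adj v u)
    (A : Set V) (F : ∀ u v : V, Wk adj u v → Prop) : Type where
  d : ℕ
  hodd : Odd d
  hpos : 0 < d
  hub : Fin d → V
  H : ∀ i : Fin d, Wk adj (hub i) (hub (finRotate d i))
  src : Fin d → V
  hsrc : ∀ i, src i ∈ A
  S : ∀ i : Fin d, Wk adj (src i) (hub i)
  spoke_path : ∀ i, (S i).support.Nodup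
  spokes_disjoint : ∀ i j, i ≠ j → ∀ x, x ∈ (S i).support → x ∉ (S j).support
  spoke_meets_cycle : ∀ i j, ∀ x, x ∈ (S i).support → x ∈ (H j).support → x = hub i
  cycle_simple : ∀ x : V, (∑ i : Fin d, (H i).support.dropLast.count x) ≤ 1
  cycle_len : 3 ≤ ∑ i : Fin d, (H i).support.dropLast.length
  mem : ∀ i : Fin d, F (src i) (src (finRotate d i))
    (((S i).app (H i)).app ((S (finRotate d i)).rev hs))

/-- The set of vertices of a wheel. -/
def Wheel.verts {V : Type} [DecidableEq V] {adj : V → V → Prop}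
    {hs : ∀ u v : V, adj u v → adj v u}
    {A : Set V} {F : ∀ u v : V, Wk adj u v → Prop}
    (w : Wheel hs A F) : Finset V :=
  Finset.univ.biUnion
    (fun i : Fin w.d => (w.H i).support.toFinset ∪ (w.S i).support.toFinset)

/-- The set of vertices of an integral path (given with its endpoints). -/
def pVerts {V : Type} [DecidableEq V] {adj : V → V → Prop}
    (p : Σ s t : V, Wk adj s t) : Finset V :=
  p.2.2.support.toFinset

section AuxLemmas

variable {V : Type} {adj : V → V → Prop}

theorem Wk.support_ne_nil {u w : V} (p : Wk adj u w) : p.support ≠ [] := by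
  cases p <;> simp [Wk.support]

theorem Wk.support_head {u w : V} (p : Wk adj u w) : ∃ l, p.support = u :: l := by
  cases p <;> simp [Wk.support]

theorem Wk.support_app {u v w : V} (p : Wk adj u v) (q : Wk adj v w) :
    (p.app q).support = p.support.dropLast ++ q.support := by
  induction p with
  | nil x => simp [Wk.app, Wk.support]
  | cons h p ih =>
    show _ :: (p.app q).support = _
    rw [ih, Wk.support, List.dropLast_cons_of_ne_nil p.support_ne_nil, List.cons_append]

theorem Wk.support_dropLast_concat {u w : V} (p : Wk adj u w) :
    p.support.dropLast ++ [w] = p.support := by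
  induction p with
  | nil x => simp [Wk.support]
  | cons h p ih =>
    rw [Wk.support, List.dropLast_cons_of_ne_nil p.support_ne_nil, List.cons_append, ih]

theorem Wk.support_rev (hs : ∀ u v : V, adj u v → adj v u) {u w : V} (p : Wk adj u w) :
    (p.rev hs).support = p.support.reverse := by
  induction p with
  | nil x => simp [Wk.rev, Wk.support]
  | cons h p ih =>
    show ((p.rev hs).app _).support = _
    rw [Wk.support_app, ih]
    obtain ⟨l, hl⟩ := p.support_head
    simp [Wk.support, hl]

theorem mem_of_mem_dropLast {α : Type} {l : List α} {a : α} (h : a ∈ l.dropLast) : a ∈ l :=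
  (List.dropLast_sublist l).subset h

/-- Sum of `x` over a list expressed through counts over a finite type. -/
theorem lsum_eq_sum_count {V : Type} [Fintype V] [DecidableEq V] (x : V → ℚ) (l : List V) :
    (l.map x).sum = ∑ v : V, (l.count v : ℚ) * x v := by
  rw [Finset.sum_list_map_count,
    Finset.sum_subset l.toFinset.subset_univ
      (fun v _ hv => by simp [List.count_eq_zero_of_not_mem (by simpa using hv)])]
  exact Finset.sum_congr rfl fun v _ => by simp [nsmul_eq_mul]

theorem lsum_nodup {V : Type} [DecidableEq V] (x : V → ℚ) {l : List V} (hl : l.Nodup) :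
    (l.map x).sum = ∑ v ∈ l.toFinset, x v := by
  induction l with
  | nil => simp
  | cons a l ih =>
    rcases List.nodup_cons.1 hl with ⟨ha, hl'⟩
    rw [List.map_cons, List.sum_cons, ih hl', List.toFinset_cons,
      Finset.sum_insert (by simpa using ha)]

theorem sum_all_one {ι : Type} [Fintype ι] (f : ι → ℚ) (h1 : ∀ i, 1 ≤ f i)
    (hsum : ∑ i, f i ≤ (Fintype.card ι : ℚ)) : ∀ i, f i = 1 := by
  intro i
  by_contra hne
  have hlt : (1:ℚ) < f i := lt_of_le_of_ne (h1 i) (Ne.symm hne)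
  have : ∑ j : ι, (1:ℚ) < ∑ j, f j :=
    Finset.sum_lt_sum (fun j _ => h1 j) ⟨i, Finset.mem_univ i, hlt⟩
  simp only [Finset.sum_const, Finset.card_univ, nsmul_eq_mul, mul_one] at this
  linarith

open Fin.NatCast in
theorem odd_cycle_all_half {d : ℕ} (hodd : Odd d) (s : Fin d → ℚ)
    (h : ∀ i, s i + s (finRotate d i) = 1) : ∀ i, s i = 1/2 := by
  obtain ⟨m, rfl⟩ := hodd
  have h' : ∀ i : Fin (2*m+1), s (i+1) = 1 - s i := by
    intro i; have := h i; rw [finRotate_succ_apply] at this; linarith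
  have key : ∀ (k : ℕ) (i : Fin (2*m+1)),
      s (i + (k:Fin (2*m+1))) = if Even k then s i else 1 - s i := by
    intro k
    induction k with
    | zero => simp
    | succ k ih =>
      intro i
      have hcast : ((k+1 : ℕ) : Fin (2*m+1)) = (k : Fin (2*m+1)) + 1 := by push_cast; ring
      rw [hcast, ← add_assoc, h' (i + (k : Fin (2*m+1))), ih i]
      rcases Nat.even_or_odd k with he | ho
      · simp [he, Nat.even_add_one]
      · simp [Nat.not_even_iff_odd.mpr ho, Nat.even_add_one]
  intro i
  have hd := key (2*m+1) i
  rw [Fin.natCast_self, add_zero, if_neg (by simp [parity_simps])] at hd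
  linarith

theorem finRotate_ne_self {d : ℕ} (hd : 2 ≤ d) (j : Fin d) : finRotate d j ≠ j := by
  obtain ⟨n, rfl⟩ : ∃ n, d = n + 2 := ⟨d - 2, by omega⟩
  rw [finRotate_succ_apply]
  intro h
  have h2 : j + 1 = j + 0 := by simpa using h
  have h3 := add_left_cancel h2
  have h0 := congrArg Fin.val h3
  simp [Fin.val_one] at h0

theorem wheel_main {V : Type} [Fintype V] [DecidableEq V] {adj : V → V → Prop}
    {hs : ∀ u v : V, adj u v → adj v u} {A : Set V} {F : ∀ u v : V, Wk adj u v → Prop}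
    (W : Wheel hs A F) (x : V → ℚ) (hx0 : ∀ v, 0 ≤ x v)
    (hcover : ∀ (s t : V) (Wa : Wk adj s t), F s t Wa → 1 ≤ (Wa.support.map x).sum) :
    ((W.d : ℚ))/2 ≤ ∑ v ∈ W.verts, x v ∧
      (∑ v ∈ W.verts, x v ≤ (W.d : ℚ)/2 →
        ∀ i, ∑ v ∈ (W.S i).support.toFinset, x v = 1/2) := by
  classical
  set s : Fin W.d → ℚ := fun i => ∑ v ∈ (W.S i).support.toFinset, x v with hsdef
  set m : Fin W.d → ℚ := fun i => (((W.H i).support.dropLast).map x).sum with hmdef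
  set spF : Finset V := Finset.univ.biUnion (fun i => (W.S i).support.toFinset) with hspF
  -- basic membership facts
  have hhubS : ∀ i, W.hub i ∈ (W.S i).support := by
    intro i
    rw [← (W.S i).support_dropLast_concat]
    simp
  have hub_inj : Function.Injective W.hub := by
    intro i j hij
    by_contra hne
    exact W.spokes_disjoint i j hne _ (hhubS i) (by rw [hij]; exact hhubS j)
  have hSsub : ∀ i, (W.S i).support.toFinset ⊆ W.verts := by
    intro i v hv
    exact Finset.mem_biUnion.2 ⟨i, Finset.mem_univ i, Finset.mem_union_right _ hv⟩
  have hHsub : ∀ (i) (v : V), v ∈ (W.H i).support → v ∈ W.verts := by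
    intro i v hv
    exact Finset.mem_biUnion.2
      ⟨i, Finset.mem_univ i, Finset.mem_union_left _ (List.mem_toFinset.2 hv)⟩
  have hhub_spF : ∀ i, W.hub i ∈ spF := fun i =>
    Finset.mem_biUnion.2 ⟨i, Finset.mem_univ i, List.mem_toFinset.2 (hhubS i)⟩
  have hspF_sub : spF ⊆ W.verts := by
    intro v hv
    obtain ⟨i, _, hi⟩ := Finset.mem_biUnion.1 hv
    exact hSsub i hi
  -- a vertex of the cycle that lies on a spoke is the hub of that spoke
  have hcyc_sp : ∀ (i : Fin W.d) (v : V), v ∈ (W.H i).support → v ∈ spF → ∃ j, v = W.hub j := by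
    intro i v hv hvsp
    obtain ⟨j, _, hj⟩ := Finset.mem_biUnion.1 hvsp
    exact ⟨j, W.spoke_meets_cycle j i v (List.mem_toFinset.1 hj) hv⟩
  -- spoke list sums
  have hlsumS : ∀ i, ((W.S i).support.map x).sum = s i := fun i =>
    lsum_nodup x (W.spoke_path i)
  have hdlS : ∀ i, ((W.S i).support.dropLast.map x).sum = s i - x (W.hub i) := by
    intro i
    have h2 := congrArg (fun l => (l.map x).sum) (W.S i).support_dropLast_concat
    simp only [List.map_append, List.sum_append, List.map_cons, List.map_nil,
      List.sum_cons, List.sum_nil] at h2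
    rw [hlsumS i] at h2
    linarith
  -- the cover constraints
  have hcon : ∀ i, 1 ≤ (s i - x (W.hub i)) + m i + s (finRotate W.d i) := by
    intro i
    have h1 := hcover _ _ _ (W.mem i)
    rw [Wk.support_app, Wk.support_app, Wk.support_rev,
      List.dropLast_append_of_ne_nil (W.H i).support_ne_nil] at h1
    simp only [List.map_append, List.sum_append, List.map_reverse, List.sum_reverse] at h1
    rw [hdlS i, hlsumS (finRotate W.d i)] at h1
    linarith
  -- sum of the cycle-segment sums
  have hm_count : ∀ i, m i = ∑ v : V, (((W.H i).support.dropLast.count v : ℕ) : ℚ) * x v :=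
    fun i => lsum_eq_sum_count x _
  have hsum_m : ∑ i, m i ≤ (∑ i, x (W.hub i)) + ∑ v ∈ W.verts \ spF, x v := by
    have h1 : ∑ i, m i
        = ∑ v : V, ((∑ i, (W.H i).support.dropLast.count v : ℕ) : ℚ) * x v := by
      rw [Finset.sum_congr rfl fun i _ => hm_count i, Finset.sum_comm]
      refine Finset.sum_congr rfl fun v _ => ?_
      rw [← Finset.sum_mul]
      push_cast
      ring
    set hubF : Finset V := Finset.univ.image W.hub with hhubF
    have hdisj : Disjoint hubF (W.verts \ spF) := by
      refine Finset.disjoint_left.2 fun v hv hv' => ?_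
      obtain ⟨i, _, rfl⟩ := Finset.mem_image.1 hv
      exact (Finset.mem_sdiff.1 hv').2 (hhub_spF i)
    have h2 : ∀ v : V, ((∑ i, (W.H i).support.dropLast.count v : ℕ) : ℚ) * x v
        ≤ if v ∈ hubF ∪ (W.verts \ spF) then x v else 0 := by
      intro v
      rcases Nat.eq_zero_or_pos (∑ i, (W.H i).support.dropLast.count v) with hz | hp
      · rw [hz]
        simp only [Nat.cast_zero, zero_mul]
        split
        · exact hx0 v
        · exact le_refl _
      · have hle := W.cycle_simple v
        have hc1 : (∑ i, (W.H i).support.dropLast.count v) = 1 := le_antisymm hle hp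
        obtain ⟨i, _, hi⟩ : ∃ i ∈ Finset.univ, 0 < (W.H i).support.dropLast.count v := by
          by_contra hno
          push_neg at hno
          have : (∑ i, (W.H i).support.dropLast.count v) = 0 :=
            Finset.sum_eq_zero fun i hiu => Nat.le_zero.1 (hno i hiu)
          omega
        have hvH : v ∈ (W.H i).support :=
          mem_of_mem_dropLast (List.count_pos_iff.1 hi)
        have hmem : v ∈ hubF ∪ (W.verts \ spF) := by
          by_cases hvsp : v ∈ spF
          · obtain ⟨j, rfl⟩ := hcyc_sp i v hvH hvsp
            exact Finset.mem_union_left _ (Finset.mem_image.2 ⟨j, Finset.mem_univ j, rfl⟩)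
          · exact Finset.mem_union_right _ (Finset.mem_sdiff.2 ⟨hHsub i v hvH, hvsp⟩)
        rw [hc1, if_pos hmem]
        simp
    calc ∑ i, m i ≤ ∑ v : V, if v ∈ hubF ∪ (W.verts \ spF) then x v else 0 := by
          rw [h1]; exact Finset.sum_le_sum fun v _ => h2 v
      _ = ∑ v ∈ hubF ∪ (W.verts \ spF), x v := by
          rw [Finset.sum_ite_mem, Finset.univ_inter]
      _ = (∑ v ∈ hubF, x v) + ∑ v ∈ W.verts \ spF, x v := Finset.sum_union hdisj
      _ = (∑ i, x (W.hub i)) + ∑ v ∈ W.verts \ spF, x v := by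
          rw [Finset.sum_image fun i _ j _ h => hub_inj h]
  have hrot : ∑ i, s (finRotate W.d i) = ∑ i, s i := Equiv.sum_comp (finRotate W.d) s
  have hkey : (W.d : ℚ) ≤ 2 * (∑ i, s i) + ∑ v ∈ W.verts \ spF, x v := by
    have h0 : ∑ i : Fin W.d, (1:ℚ) ≤ ∑ i, ((s i - x (W.hub i)) + m i + s (finRotate W.d i)) :=
      Finset.sum_le_sum fun i _ => hcon i
    simp only [Finset.sum_add_distrib, Finset.sum_sub_distrib, Finset.sum_const,
      Finset.card_univ, Fintype.card_fin, nsmul_eq_mul, mul_one] at h0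
    rw [hrot] at h0
    linarith
  have hspsum : ∑ v ∈ spF, x v = ∑ i, s i := by
    rw [hspF]
    rw [Finset.sum_biUnion]
    intro i _ j _ hij
    refine Finset.disjoint_left.2 fun v hv hv' => ?_
    exact W.spokes_disjoint i j hij v (List.mem_toFinset.1 hv) (List.mem_toFinset.1 hv')
  have hsplit : (∑ v ∈ W.verts \ spF, x v) + ∑ v ∈ spF, x v = ∑ v ∈ W.verts, x v :=
    Finset.sum_sdiff hspF_sub
  have hc_nonneg : 0 ≤ ∑ v ∈ W.verts \ spF, x v :=
    Finset.sum_nonneg fun v _ => hx0 v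
  constructor
  · linarith
  · intro htight
    have hczero : ∑ v ∈ W.verts \ spF, x v = 0 := by linarith
    have hzero : ∀ v ∈ W.verts \ spF, x v = 0 := fun v hv =>
      (Finset.sum_eq_zero_iff_of_nonneg fun u _ => hx0 u).1 hczero v hv
    have hssum : ∑ i, s i = (W.d : ℚ) / 2 := by linarith
    -- d ≥ 2 case: every vertex of segment i off the spokes other than hub i has x = 0
    have hm_le : ∀ i, m i ≤ x (W.hub i) := by
      intro i
      rw [hm_count i]
      have hterm : ∀ v : V, (((W.H i).support.dropLast.count v : ℕ) : ℚ) * x v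
          ≤ if v = W.hub i then x v else 0 := by
        intro v
        rcases Nat.eq_zero_or_pos ((W.H i).support.dropLast.count v) with hz | hp
        · rw [hz]
          simp only [Nat.cast_zero, zero_mul]
          split
          · exact hx0 v
          · exact le_refl _
        · have hvdl : v ∈ (W.H i).support.dropLast := List.count_pos_iff.1 hp
          have hvH : v ∈ (W.H i).support := mem_of_mem_dropLast hvdl
          by_cases hveq : v = W.hub i
          · rw [if_pos hveq]
            have hle1 : (W.H i).support.dropLast.count v ≤ 1 := by
              have := W.cycle_simple v
              have hle2 : (W.H i).support.dropLast.count v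
                  ≤ ∑ j, (W.H j).support.dropLast.count v :=
                Finset.single_le_sum (f := fun j => (W.H j).support.dropLast.count v)
                  (fun j _ => Nat.zero_le _) (Finset.mem_univ i)
              omega
            calc (((W.H i).support.dropLast.count v : ℕ) : ℚ) * x v ≤ 1 * x v := by
                  have : (((W.H i).support.dropLast.count v : ℕ) : ℚ) ≤ 1 := by
                    exact_mod_cast hle1
                  exact mul_le_mul_of_nonneg_right this (hx0 v)
              _ = x v := one_mul _
          · rw [if_neg hveq]
            have hxv : x v = 0 := by
              by_cases hvsp : v ∈ spF
              · obtain ⟨j, rfl⟩ := hcyc_sp i v hvH hvsp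
                have hji : j ≠ i := fun h => hveq (by rw [h])
                -- the segment `H j` is non-trivial
                have hdlj : (W.H j).support.dropLast ≠ [] := by
                  intro hnil
                  have h1 := (W.H j).support_dropLast_concat
                  rw [hnil, List.nil_append] at h1
                  obtain ⟨l, hl⟩ := (W.H j).support_head
                  rw [hl] at h1
                  have heq : W.hub ((finRotate W.d) j) = W.hub j := by
                    have h2 := h1.symm
                    injection h2 with h3 _
                    exact h3.symm
                  have hfix : finRotate W.d j = j := hub_inj heq
                  have hd2 : 2 ≤ W.d := by
                    by_contra hlt
                    push_neg at hlt
                    exact hji (Fin.ext (by have := j.isLt; have := i.isLt; omega))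
                  exact finRotate_ne_self hd2 j hfix
                -- the hub of `j` lies on the segment `H j`
                have hhubdlj : W.hub j ∈ (W.H j).support.dropLast := by
                  obtain ⟨l, hl⟩ := (W.H j).support_head
                  have h1 := (W.H j).support_dropLast_concat
                  obtain ⟨a, t, hdl⟩ := List.exists_cons_of_ne_nil hdlj
                  rw [hdl, hl, List.cons_append] at h1
                  injection h1 with h2 _
                  rw [hdl, ← h2]
                  exact List.mem_cons_self
                -- contradiction with simplicity of the cycle
                have hge2 : 2 ≤ ∑ k, (W.H k).support.dropLast.count (W.hub j) := by
                  have hsub2 : ({j, i} : Finset (Fin W.d)) ⊆ Finset.univ :=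
                    Finset.subset_univ _
                  have h2 : ∑ k ∈ ({j, i} : Finset (Fin W.d)),
                      (W.H k).support.dropLast.count (W.hub j)
                      ≤ ∑ k, (W.H k).support.dropLast.count (W.hub j) :=
                    Finset.sum_le_sum_of_subset hsub2
                  rw [Finset.sum_pair hji] at h2
                  have hcj : 1 ≤ (W.H j).support.dropLast.count (W.hub j) :=
                    List.count_pos_iff.2 hhubdlj
                  have hci : 1 ≤ (W.H i).support.dropLast.count (W.hub j) :=
                    List.count_pos_iff.2 hvdl
                  omega
                have := W.cycle_simple (W.hub j)
                omega
              · exact hzero v (Finset.mem_sdiff.2 ⟨hHsub i v hvH, hvsp⟩)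
            rw [hxv, mul_zero]
      calc ∑ v : V, (((W.H i).support.dropLast.count v : ℕ) : ℚ) * x v
          ≤ ∑ v : V, if v = W.hub i then x v else 0 := Finset.sum_le_sum fun v _ => hterm v
        _ = x (W.hub i) := by rw [Finset.sum_ite_eq' Finset.univ (W.hub i) x]; simp
    have hcon' : ∀ i, 1 ≤ s i + s (finRotate W.d i) := by
      intro i
      have := hcon i
      have := hm_le i
      linarith
    have heq1 : ∀ i, s i + s (finRotate W.d i) = 1 := by
      refine sum_all_one _ hcon' ?_
      rw [Finset.sum_add_distrib, hrot, Fintype.card_fin]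
      linarith
    exact odd_cycle_all_half W.hodd s heq1

end AuxLemmas

/-- Lemma on the structure of minimum covers: let `y` be a maximum
basic `F`-packing, given by vertex-disjoint integral paths (indexed by `ιP`) and
wheels (indexed by `ιW`), and let `x` be a minimum half-integral `F`-cover with
`|x| = |y|`. Then `x(V(I)) = 1` for every integral path `I` of `y`, and
`x(V(S)) = 1/2` for every spoke `S` of every wheel of `y`. -/
theorem cover_on_packing
    {V : Type} [Fintype V] [DecidableEq V] {adj : V → V → Prop}
    (hs : ∀ u v : V, adj u v → adj v u)
    (A : Set V) (F : ∀ u v : V, Wk adj u v → Prop)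
    {ιP ιW : Type} [Fintype ιP] [Fintype ιW]
    (pth : ιP → Σ s t : V, Wk adj s t)
    (hpthF : ∀ p, F (pth p).1 (pth p).2.1 (pth p).2.2)
    (hpthSimple : ∀ p, (pth p).2.2.support.Nodup)
    (whl : ιW → Wheel hs A F)
    (hPP : ∀ p p', p ≠ p' → Disjoint (pVerts (pth p)) (pVerts (pth p')))
    (hWW : ∀ w w', w ≠ w' → Disjoint (whl w).verts (whl w').verts)
    (hPW : ∀ p w, Disjoint (pVerts (pth p)) (whl w).verts)
    (x : V → ℚ)
    (hxval : ∀ v, x v = 0 ∨ x v = 1/2 ∨ x v = 1)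
    (hcover : ∀ (s t : V) (W : Wk adj s t), F s t W → 1 ≤ (W.support.map x).sum)
    (hsize : ∑ v : V, x v = (Fintype.card ιP : ℚ) + ∑ w : ιW, ((whl w).d : ℚ) / 2) :
    (∀ p : ιP, (∑ v ∈ pVerts (pth p), x v) = 1) ∧
    (∀ (w : ιW) (i : Fin (whl w).d),
      (∑ v ∈ ((whl w).S i).support.toFinset, x v) = 1/2) := by
  classical
  have hx0 : ∀ v, 0 ≤ x v := by
    intro v; rcases hxval v with h | h | h <;> rw [h] <;> norm_num
  have hP1 : ∀ p, 1 ≤ ∑ v ∈ pVerts (pth p), x v := by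
    intro p
    have h := hcover _ _ _ (hpthF p)
    rwa [lsum_nodup x (hpthSimple p)] at h
  have hW1 : ∀ w, ((whl w).d : ℚ)/2 ≤ ∑ v ∈ (whl w).verts, x v :=
    fun w => (wheel_main (whl w) x hx0 hcover).1
  set PF : Finset V := Finset.univ.biUnion (fun p : ιP => pVerts (pth p)) with hPF
  set WF : Finset V := Finset.univ.biUnion (fun w : ιW => (whl w).verts) with hWF
  have hPFsum : ∑ v ∈ PF, x v = ∑ p : ιP, ∑ v ∈ pVerts (pth p), x v := by
    rw [hPF]
    exact Finset.sum_biUnion (fun p _ p' _ h => hPP p p' h)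
  have hWFsum : ∑ v ∈ WF, x v = ∑ w : ιW, ∑ v ∈ (whl w).verts, x v := by
    rw [hWF]
    exact Finset.sum_biUnion (fun w _ w' _ h => hWW w w' h)
  have hdisjPW : Disjoint PF WF := by
    rw [hPF, hWF, Finset.disjoint_biUnion_left]
    intro p _
    rw [Finset.disjoint_biUnion_right]
    intro w _
    exact hPW p w
  have hle : ∑ v ∈ PF ∪ WF, x v ≤ ∑ v : V, x v :=
    Finset.sum_le_sum_of_subset_of_nonneg (Finset.subset_univ _) (fun v _ _ => hx0 v)
  rw [Finset.sum_union hdisjPW] at hle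
  have hPcard : ∑ p : ιP, (1:ℚ) = (Fintype.card ιP : ℚ) := by
    simp [Finset.card_univ]
  have hsumP0 : (0:ℚ) ≤ ∑ p : ιP, ((∑ v ∈ pVerts (pth p), x v) - 1) :=
    Finset.sum_nonneg fun p _ => by linarith [hP1 p]
  have hsumW0 : (0:ℚ) ≤ ∑ w : ιW, ((∑ v ∈ (whl w).verts, x v) - ((whl w).d : ℚ)/2) :=
    Finset.sum_nonneg fun w _ => by linarith [hW1 w]
  have hsplitP : ∑ p : ιP, ((∑ v ∈ pVerts (pth p), x v) - 1)
      = (∑ p : ιP, ∑ v ∈ pVerts (pth p), x v) - (Fintype.card ιP : ℚ) := by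
    rw [Finset.sum_sub_distrib, hPcard]
  have hsplitW : ∑ w : ιW, ((∑ v ∈ (whl w).verts, x v) - ((whl w).d : ℚ)/2)
      = (∑ w : ιW, ∑ v ∈ (whl w).verts, x v) - ∑ w : ιW, ((whl w).d : ℚ)/2 := by
    rw [Finset.sum_sub_distrib]
  have htot : (∑ p : ιP, ((∑ v ∈ pVerts (pth p), x v) - 1))
      + ∑ w : ιW, ((∑ v ∈ (whl w).verts, x v) - ((whl w).d : ℚ)/2) ≤ 0 := by
    rw [hsplitP, hsplitW]
    have hsize' : ∑ v : V, x v = (Fintype.card ιP : ℚ) + ∑ w : ιW, ((whl w).d : ℚ) / 2 := hsize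
    linarith [hle, hPFsum, hWFsum]
  have hPzero : ∀ p : ιP, (∑ v ∈ pVerts (pth p), x v) - 1 = 0 := by
    have h0 : ∑ p : ιP, ((∑ v ∈ pVerts (pth p), x v) - 1) = 0 := le_antisymm (by linarith) hsumP0
    exact fun p => (Finset.sum_eq_zero_iff_of_nonneg
      (fun q _ => by linarith [hP1 q])).1 h0 p (Finset.mem_univ p)
  have hWzero : ∀ w : ιW, (∑ v ∈ (whl w).verts, x v) - ((whl w).d : ℚ)/2 = 0 := by
    have h0 : ∑ w : ιW, ((∑ v ∈ (whl w).verts, x v) - ((whl w).d : ℚ)/2) = 0 :=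
      le_antisymm (by linarith) hsumW0
    exact fun w => (Finset.sum_eq_zero_iff_of_nonneg
      (fun u _ => by linarith [hW1 u])).1 h0 w (Finset.mem_univ w)
  constructor
  · intro p
    have := hPzero p
    linarith
  · intro w i
    exact (wheel_main (whl w) x hx0 hcover).2 (by linarith [hWzero w]) i
end

section
/- Let (F, F*) be a nice pair and suppose for an edge uv there exists a class [W] ∈ D(uv) with f_{uv}([W]) ∉ D(vu). Then there exist classes a ∈ D(u) and b ∈ D(v) such that D(uv) = D(u) \ {a}, D(vu) = D(v) \ {b}, f_{uv}(a') = b for every a' ∈ D(uv), and f_{vu}(b') = a for every b' ∈ D(vu) (i.e., the edge behaves as a two-fan constraint (φ(u)=a)∨(φ(v)=b)). -/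
/-- A pair `(F, F*)` of sets of walks is *nice* if: `F ⊆ F*`; `F*` is closed under
taking prefixes; the relation `P ≡ Q` (for `P, Q ∈ F*` ending at the same vertex,
defined by `P ∘ Q⁻¹ ∉ F`) is an equivalence relation; and equivalent walks can be
extended by an edge inside `F*` in the same ways. -/
structure IsNice {V : Type} {adj : V → V → Prop}
    (hs : ∀ u v : V, adj u v → adj v u)
    (F Fstar : ∀ u v : V, Wk adj u v → Prop) : Prop where
  sub : ∀ u v (W : Wk adj u v), F u v W → Fstar u v W
  prefix_closed : ∀ u v w (P : Wk adj u v) (Q : Wk adj v w),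
    Fstar u w (P.app Q) → Fstar u v P
  refl : ∀ u t (P : Wk adj u t), Fstar u t P → ¬ F u u (P.app (P.rev hs))
  symm : ∀ u v t (P : Wk adj u t) (Q : Wk adj v t), Fstar u t P → Fstar v t Q →
    ¬ F u v (P.app (Q.rev hs)) → ¬ F v u (Q.app (P.rev hs))
  trans : ∀ u v w t (P : Wk adj u t) (Q : Wk adj v t) (R : Wk adj w t),
    Fstar u t P → Fstar v t Q → Fstar w t R →
    ¬ F u v (P.app (Q.rev hs)) → ¬ F v w (Q.app (R.rev hs)) →
    ¬ F u w (P.app (R.rev hs))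
  ext : ∀ u v t t' (P : Wk adj u t) (Q : Wk adj v t) (h : adj t t'),
    Fstar u t P → Fstar v t Q → ¬ F u v (P.app (Q.rev hs)) →
    (Fstar u t' (P.ext h) ↔ Fstar v t' (Q.ext h))


lemma Wk.app_assoc {V : Type} {adj : V → V → Prop} {a b c d : V}
    (P : Wk adj a b) (Q : Wk adj b c) (R : Wk adj c d) :
    (P.app Q).app R = P.app (Q.app R) := by
  induction P with
  | nil => rfl
  | cons h p ih => simp [Wk.app, ih]

lemma Wk.ext_rev {V : Type} {adj : V → V → Prop}
    (hs : ∀ u v : V, adj u v → adj v u) {s t t' : V}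
    (P : Wk adj s t) (e : adj t t') :
    (P.ext e).rev hs = Wk.cons (hs t t' e) (P.rev hs) := by
  induction P with
  | nil => rfl
  | cons f p ih =>
    show ((p.ext e).rev hs).app _ = _
    rw [ih]
    rfl

lemma Wk.app_ext_rev {V : Type} {adj : V → V → Prop}
    (hs : ∀ u v : V, adj u v → adj v u) {r s t t' : V}
    (A : Wk adj r t') (B : Wk adj s t) (e : adj t t') :
    A.app ((B.ext e).rev hs) = (A.ext (hs t t' e)).app (B.rev hs) := by
  rw [Wk.ext_rev hs B e]
  show _ = (A.app _).app _
  rw [Wk.app_assoc]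
  rfl

/-- let `(F, F*)` be a nice pair and `uv` an edge such that some
class `[W] ∈ D(uv)` has `f_{uv}([W]) ∉ D(vu)` (and `D(vu)` is nonempty). Then there
are classes `a = [Wa] ∈ D(u)` and `b = [Wb] ∈ D(v)` such that `D(uv) = D(u) \ {a}`,
`D(vu) = D(v) \ {b}`, `f_{uv} ≡ b` on `D(uv)` and `f_{vu} ≡ a` on `D(vu)`; i.e. the
edge behaves as the two-fan constraint `(φ(u)=a) ∨ (φ(v)=b)`. All statements are
expressed on representative walks, with `P ≡ Q` meaning `P∘Q⁻¹ ∉ F`. -/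
theorem nice_twofan_edge
    {V : Type} {adj : V → V → Prop}
    (hs : ∀ u v : V, adj u v → adj v u)
    (F Fstar : ∀ u v : V, Wk adj u v → Prop)
    (hnice : IsNice hs F Fstar)
    {u v : V} (h : adj u v)
    (hex : ∃ (s : V) (W : Wk adj s u), Fstar s u W ∧ Fstar s v (W.ext h) ∧
      ¬ Fstar s u ((W.ext h).ext (hs u v h)))
    (hvu : ∃ (s' : V) (W' : Wk adj s' v), Fstar s' v W' ∧
      Fstar s' u (W'.ext (hs u v h))) :
    ∃ (sa : V) (Wa : Wk adj sa u) (sb : V) (Wb : Wk adj sb v),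
      Fstar sa u Wa ∧ Fstar sb v Wb ∧
      (∀ s (P : Wk adj s u), Fstar s u P →
        (Fstar s v (P.ext h) ↔ F s sa (P.app (Wa.rev hs)))) ∧
      (∀ s (Q : Wk adj s v), Fstar s v Q →
        (Fstar s u (Q.ext (hs u v h)) ↔ F s sb (Q.app (Wb.rev hs)))) ∧
      (∀ s (P : Wk adj s u), Fstar s u P → Fstar s v (P.ext h) →
        ¬ F s sb ((P.ext h).app (Wb.rev hs))) ∧
      (∀ s (Q : Wk adj s v), Fstar s v Q → Fstar s u (Q.ext (hs u v h)) →
        ¬ F s sa ((Q.ext (hs u v h)).app (Wa.rev hs))) := by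
  classical
  obtain ⟨sW, W, hW, hWb, hWret⟩ := hex
  obtain ⟨sW', W', hW', hWa⟩ := hvu
  -- G3: every class in D(uv) maps to b = [W.ext h]
  have G3 : ∀ s (P : Wk adj s u), Fstar s u P → Fstar s v (P.ext h) →
      ¬ F s sW ((P.ext h).app ((W.ext h).rev hs)) := by
    intro s P hP hPv hF
    have hF2 : F sW s ((W.ext h).app ((P.ext h).rev hs)) := by
      by_contra hn
      exact hnice.symm sW s v (W.ext h) (P.ext h) hWb hPv hn hF
    have heq : (W.ext h).app ((P.ext h).rev hs)
        = ((W.ext h).ext (hs u v h)).app (P.rev hs) :=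
      Wk.app_ext_rev hs (W.ext h) P h
    rw [heq] at hF2
    exact hWret (hnice.prefix_closed _ _ _ _ _ (hnice.sub _ _ _ hF2))
  -- N: Wa = W'.ext (hs u v h) does not extend by uv
  have hN : ¬ Fstar sW' v ((W'.ext (hs u v h)).ext h) := by
    intro hN'
    have h1 := G3 sW' (W'.ext (hs u v h)) hWa hN'
    have h2 : ¬ F sW' sW' (((W'.ext (hs u v h)).ext h).app (W'.rev hs)) := by
      have hr := hnice.refl sW' u (W'.ext (hs u v h)) hWa
      rwa [Wk.app_ext_rev hs (W'.ext (hs u v h)) W' (hs u v h)] at hr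
    have h3 : ¬ F sW' sW' (W'.app (((W'.ext (hs u v h)).ext h).rev hs)) :=
      hnice.symm sW' sW' v ((W'.ext (hs u v h)).ext h) W' hN' hW' h2
    have h4 : ¬ F sW' sW (W'.app ((W.ext h).rev hs)) :=
      hnice.trans sW' sW' sW v W' ((W'.ext (hs u v h)).ext h) (W.ext h)
        hW' hN' hWb h3 h1
    exact hWret ((hnice.ext sW' sW v u W' (W.ext h) (hs u v h) hW' hWb h4).mp hWa)
  -- G4: every class in D(vu) maps to a = [W'.ext (hs u v h)]
  have G4 : ∀ s (Q : Wk adj s v), Fstar s v Q → Fstar s u (Q.ext (hs u v h)) →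
      ¬ F s sW' ((Q.ext (hs u v h)).app ((W'.ext (hs u v h)).rev hs)) := by
    intro s Q hQ hQu hF
    have hF2 : F sW' s ((W'.ext (hs u v h)).app ((Q.ext (hs u v h)).rev hs)) := by
      by_contra hn
      exact hnice.symm sW' s u (W'.ext (hs u v h)) (Q.ext (hs u v h)) hWa hQu hn hF
    rw [Wk.app_ext_rev hs (W'.ext (hs u v h)) Q (hs u v h)] at hF2
    exact hN (hnice.prefix_closed _ _ _ _ _ (hnice.sub _ _ _ hF2))
  -- G1: D(uv) = D(u) \ {a}
  have G1 : ∀ s (P : Wk adj s u), Fstar s u P →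
      (Fstar s v (P.ext h) ↔ F s sW' (P.app ((W'.ext (hs u v h)).rev hs))) := by
    intro s P hP
    have heq : P.app ((W'.ext (hs u v h)).rev hs) = (P.ext h).app (W'.rev hs) :=
      Wk.app_ext_rev hs P W' (hs u v h)
    rw [heq]
    constructor
    · intro hPv
      by_contra hnF
      have h3 : ¬ F sW' s (W'.app ((P.ext h).rev hs)) :=
        hnice.symm s sW' v (P.ext h) W' hPv hW' hnF
      have h1 := G3 s P hP hPv
      have h4 : ¬ F sW' sW (W'.app ((W.ext h).rev hs)) :=
        hnice.trans sW' s sW v W' (P.ext h) (W.ext h) hW' hPv hWb h3 h1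
      exact hWret ((hnice.ext sW' sW v u W' (W.ext h) (hs u v h) hW' hWb h4).mp hWa)
    · intro hF
      exact hnice.prefix_closed _ _ _ _ _ (hnice.sub _ _ _ hF)
  -- G2: D(vu) = D(v) \ {b}
  have G2 : ∀ s (Q : Wk adj s v), Fstar s v Q →
      (Fstar s u (Q.ext (hs u v h)) ↔ F s sW (Q.app ((W.ext h).rev hs))) := by
    intro s Q hQ
    have heq : Q.app ((W.ext h).rev hs) = (Q.ext (hs u v h)).app (W.rev hs) :=
      Wk.app_ext_rev hs Q W h
    rw [heq]
    constructor
    · intro hQu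
      by_contra hnF
      have hx := (hnice.ext s sW u v (Q.ext (hs u v h)) W h hQu hW hnF).mpr hWb
      have h1 := G3 s (Q.ext (hs u v h)) hQu hx
      have hC2 : ¬ F s s (((Q.ext (hs u v h)).ext h).app (Q.rev hs)) := by
        have hr := hnice.refl s u (Q.ext (hs u v h)) hQu
        rwa [Wk.app_ext_rev hs (Q.ext (hs u v h)) Q (hs u v h)] at hr
      have h2 : ¬ F s s (Q.app (((Q.ext (hs u v h)).ext h).rev hs)) :=
        hnice.symm s s v ((Q.ext (hs u v h)).ext h) Q hx hQ hC2
      have h3 : ¬ F s sW (Q.app ((W.ext h).rev hs)) :=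
        hnice.trans s s sW v Q ((Q.ext (hs u v h)).ext h) (W.ext h) hQ hx hWb h2 h1
      exact hWret ((hnice.ext s sW v u Q (W.ext h) (hs u v h) hQ hWb h3).mp hQu)
    · intro hF
      exact hnice.prefix_closed _ _ _ _ _ (hnice.sub _ _ _ hF)
  exact ⟨sW', W'.ext (hs u v h), sW, W.ext h, hWa, hWb, G1, G2, G3, G4⟩
end
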